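/- Every indecomposable PInD-injective right S-act over a monoid S is injective; in particular, every indecomposable InD-injective right S-act is injective. -/

import Mathlib

universe u

/-- A right `S`-act structure on a nonempty type `A`: a right action of the monoid `S`. -/
class RightAct (S : Type u) [Monoid S] (A : Type u) : Type u where
  act : A → S → A
  act_one : ∀ a : A, act a 1 = a
  act_mul : ∀ (a : A) (s t : S), act (act a s) t = act a (s * t)
  nonempty : Nonempty A

infixl:70 " ⊛ " => RightAct.act

/-- `S` is left reversible: every two right ideals (equiv. principal ones) intersect. -/
def LeftReversible (S : Type u) [Monoid S] : Prop :=
  ∀ a b : S, ∃ u v : S, a * u = b * v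

/-- A left zero element of the monoid `S`. -/
def IsLeftZero (S : Type u) [Monoid S] (z : S) : Prop :=
  ∀ s : S, z * s = z

/-- `f : A → B` is a homomorphism of right `S`-acts. -/
def IsActHom (S : Type u) [Monoid S] {A B : Type u} [RightAct S A] [RightAct S B]
    (f : A → B) : Prop :=
  ∀ (a : A) (s : S), f (a ⊛ s) = f a ⊛ s

/-- The restriction of `f : A → B` to the subset `C` is a homomorphism of right `S`-acts. -/
def IsActHomOn (S : Type u) [Monoid S] {A B : Type u} [RightAct S A] [RightAct S B]
    (f : A → B) (C : Set A) : Prop :=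
  ∀ a ∈ C, ∀ s : S, f (a ⊛ s) = f a ⊛ s

/-- A subact: a nonempty subset closed under the action. -/
def IsSubact (S : Type u) [Monoid S] {A : Type u} [RightAct S A] (C : Set A) : Prop :=
  C.Nonempty ∧ ∀ a ∈ C, ∀ s : S, a ⊛ s ∈ C

/-- A zero element of an act: fixed by the action of every `s ∈ S`. -/
def IsZeroElem (S : Type u) [Monoid S] {A : Type u} [RightAct S A] (θ : A) : Prop :=
  ∀ s : S, θ ⊛ s = θ

/-- A subset `D` (viewed as an act) is decomposable: it is the disjoint union of two
nonempty subacts. -/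
def DecomposableSet (S : Type u) [Monoid S] {A : Type u} [RightAct S A] (D : Set A) : Prop :=
  ∃ B C : Set A, IsSubact S B ∧ IsSubact S C ∧ B ∪ C = D ∧ B ∩ C = ∅

/-- A subset (viewed as an act) is indecomposable. -/
def IndecomposableSet (S : Type u) [Monoid S] {A : Type u} [RightAct S A] (D : Set A) : Prop :=
  ¬ DecomposableSet S D

/-- The act `A` is decomposable. -/
def Decomposable (S : Type u) [Monoid S] (A : Type u) [RightAct S A] : Prop :=
  DecomposableSet S (Set.univ : Set A)

/-- The act `A` is indecomposable. -/
def Indecomposable (S : Type u) [Monoid S] (A : Type u) [RightAct S A] : Prop :=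
  ¬ Decomposable S A

/-- A cyclic act: generated by a single element. -/
def CyclicAct (S : Type u) [Monoid S] (A : Type u) [RightAct S A] : Prop :=
  ∃ a : A, ∀ x : A, ∃ s : S, x = a ⊛ s

/-- `A` is a retract of `B`. -/
def IsRetractOf (S : Type u) [Monoid S] (A B : Type u) [RightAct S A] [RightAct S B] : Prop :=
  ∃ (i : A → B) (p : B → A), IsActHom S i ∧ IsActHom S p ∧ ∀ a : A, p (i a) = a

/-- `Q` is an injective act: every homomorphism from a subact `C` of any act `B` into `Q`
extends to `B`. -/
def ActInjective (S : Type u) [Monoid S] (Q : Type u) [RightAct S Q] : Prop :=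
  ∀ (B : Type u) [RightAct S B], ∀ C : Set B, IsSubact S C →
    ∀ f : B → Q, IsActHomOn S f C →
      ∃ g : B → Q, IsActHom S g ∧ Set.EqOn g f C

/-- `Q` is InC-injective: injective relative to all embeddings into indecomposable acts. -/
def InCInjective (S : Type u) [Monoid S] (Q : Type u) [RightAct S Q] : Prop :=
  ∀ (B : Type u) [RightAct S B], Indecomposable S B → ∀ C : Set B, IsSubact S C →
    ∀ f : B → Q, IsActHomOn S f C →
      ∃ g : B → Q, IsActHom S g ∧ Set.EqOn g f C

/-- `Q` is InD-injective: injective relative to all embeddings of indecomposable acts. -/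
def InDInjective (S : Type u) [Monoid S] (Q : Type u) [RightAct S Q] : Prop :=
  ∀ (B : Type u) [RightAct S B], ∀ C : Set B, IsSubact S C → IndecomposableSet S C →
    ∀ f : B → Q, IsActHomOn S f C →
      ∃ g : B → Q, IsActHom S g ∧ Set.EqOn g f C

/-- `Q` is PInD-injective: every monomorphism from an indecomposable subact extends. -/
def PInDInjective (S : Type u) [Monoid S] (Q : Type u) [RightAct S Q] : Prop :=
  ∀ (B : Type u) [RightAct S B], ∀ C : Set B, IsSubact S C → IndecomposableSet S C →
    ∀ f : B → Q, IsActHomOn S f C → Set.InjOn f C →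
      ∃ g : B → Q, IsActHom S g ∧ Set.EqOn g f C

/-- `A` is quasi injective: homomorphisms from subacts of `A` to `A` extend to `A`. -/
def QuasiInjective (S : Type u) [Monoid S] (A : Type u) [RightAct S A] : Prop :=
  ∀ C : Set A, IsSubact S C → ∀ f : A → A, IsActHomOn S f C →
    ∃ g : A → A, IsActHom S g ∧ Set.EqOn g f C

/-- `A` is pseudo injective: monomorphisms from subacts of any act into `A` extend. -/
def PseudoInjective (S : Type u) [Monoid S] (A : Type u) [RightAct S A] : Prop :=
  ∀ (C : Type u) [RightAct S C], ∀ B : Set C, IsSubact S B →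
    ∀ f : C → A, IsActHomOn S f B → Set.InjOn f B →
      ∃ g : C → A, IsActHom S g ∧ Set.EqOn g f B

/-- A subact `Q` of `A` (viewed as an act in its own right) is injective. -/
def ActInjectiveSet (S : Type u) [Monoid S] {A : Type u} [RightAct S A] (Q : Set A) : Prop :=
  ∀ (B : Type u) [RightAct S B], ∀ C : Set B, IsSubact S C →
    ∀ f : B → A, IsActHomOn S f C → (∀ c ∈ C, f c ∈ Q) →
      ∃ g : B → A, IsActHom S g ∧ (∀ b : B, g b ∈ Q) ∧ Set.EqOn g f C

/-- A subact `Q` of `A` (viewed as an act in its own right) is InD-injective. -/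
def InDInjectiveSet (S : Type u) [Monoid S] {A : Type u} [RightAct S A] (Q : Set A) : Prop :=
  ∀ (B : Type u) [RightAct S B], ∀ C : Set B, IsSubact S C → IndecomposableSet S C →
    ∀ f : B → A, IsActHomOn S f C → (∀ c ∈ C, f c ∈ Q) →
      ∃ g : B → A, IsActHom S g ∧ (∀ b : B, g b ∈ Q) ∧ Set.EqOn g f C

/-- A subact `Q` of `A` (viewed as an act in its own right) is PInD-injective. -/
def PInDInjectiveSet (S : Type u) [Monoid S] {A : Type u} [RightAct S A] (Q : Set A) : Prop :=
  ∀ (B : Type u) [RightAct S B], ∀ C : Set B, IsSubact S C → IndecomposableSet S C →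
    ∀ f : B → A, IsActHomOn S f C → Set.InjOn f C → (∀ c ∈ C, f c ∈ Q) →
      ∃ g : B → A, IsActHom S g ∧ (∀ b : B, g b ∈ Q) ∧ Set.EqOn g f C

/-- The monoid `S` as a right act over itself, by multiplication. -/
instance selfAct (S : Type u) [Monoid S] : RightAct S S where
  act a s := a * s
  act_one := mul_one
  act_mul a s t := mul_assoc a s t
  nonempty := ⟨1⟩

/-- `Q` is weakly injective: homomorphisms from right ideals of `S` into `Q` extend to `S`. -/
def WeaklyInjective (S : Type u) [Monoid S] (Q : Type u) [RightAct S Q] : Prop :=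
  ∀ I : Set S, IsSubact S I → ∀ f : S → Q, IsActHomOn S f I →
    ∃ g : S → Q, IsActHom S g ∧ Set.EqOn g f I

/-- The relation whose equivalence closure has the indecomposable components as classes. -/
def ActRel (S : Type u) [Monoid S] {A : Type u} [RightAct S A] (a b : A) : Prop :=
  ∃ s : S, b = a ⊛ s

/-- The indecomposable component of the element `a` of an act. -/
def ActComponent (S : Type u) [Monoid S] {A : Type u} [RightAct S A] (a : A) : Set A :=
  {b | Relation.EqvGen (ActRel S) a b}

section PushAux

variable {S : Type u} [Monoid S] {B A : Type u} [RightAct S B] [RightAct S A]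

/-- Amalgam relation on `B ⊕ A` identifying `c ∈ C` with `f c`. -/
def pushRel (C : Set B) (f : B → A) : B ⊕ A → B ⊕ A → Prop
  | .inl b, .inl b' => b = b' ∨ (b ∈ C ∧ b' ∈ C ∧ f b = f b')
  | .inl b, .inr q => b ∈ C ∧ f b = q
  | .inr q, .inl b => b ∈ C ∧ f b = q
  | .inr q, .inr q' => q = q'

theorem pushRel_equiv (C : Set B) (f : B → A) : Equivalence (pushRel C f) where
  refl x := by cases x <;> simp [pushRel]
  symm {x y} h := by
    cases x <;> cases y <;> simp only [pushRel] at * <;> aesop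
  trans {x y z} hxy hyz := by
    cases x <;> cases y <;> cases z <;> simp only [pushRel] at * <;> aesop

def pushSetoid (C : Set B) (f : B → A) : Setoid (B ⊕ A) :=
  ⟨pushRel C f, pushRel_equiv C f⟩

def Push (C : Set B) (f : B → A) : Type u := Quotient (pushSetoid C f)

def pushAct (C : Set B) (f : B → A)
    (hC : ∀ a ∈ C, ∀ s : S, a ⊛ s ∈ C) (hf : IsActHomOn S f C) :
    RightAct S (Push C f) where
  act p s :=
    Quotient.lift
      (fun x => (Quotient.mk (pushSetoid C f)
        (match x with
          | .inl b => .inl (b ⊛ s)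
          | .inr q => .inr (q ⊛ s))))
      (by
        intro x y h
        replace h : pushRel C f x y := h
        apply Quotient.sound
        show pushRel C f _ _
        cases x <;> cases y <;> simp only [pushRel] at h ⊢
        · rcases h with rfl | ⟨hb, hb', he⟩
          · exact Or.inl rfl
          · exact Or.inr ⟨hC _ hb s, hC _ hb' s, by rw [hf _ hb, hf _ hb', he]⟩
        · rcases h with ⟨hb, rfl⟩
          exact ⟨hC _ hb s, by rw [hf _ hb]⟩
        · rcases h with ⟨hb, rfl⟩
          exact ⟨hC _ hb s, by rw [hf _ hb]⟩
        · rw [h]) p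
  act_one p := by
    induction p using Quotient.ind with
    | _ x => cases x <;> simp [Quotient.lift_mk, RightAct.act_one] <;> rfl
  act_mul p s t := by
    induction p using Quotient.ind with
    | _ x => cases x <;> (show Quotient.mk _ _ = Quotient.mk _ _; simp [RightAct.act_mul])
  nonempty := ⟨Quotient.mk _ (.inr (Classical.choice (RightAct.nonempty (S := S))))⟩

end PushAux

/-- Every indecomposable PInD-injective act is injective; in particular
every indecomposable InD-injective act is injective. -/
theorem indecomposable_pInDInjective_injective (S : Type u) [Monoid S]
    (A : Type u) [RightAct S A] (hA : Indecomposable S A) :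
    (PInDInjective S A → ActInjective S A) ∧
    (InDInjective S A → ActInjective S A) := by
  have key : PInDInjective S A → ActInjective S A := by
    intro hP B _ C hC f hf
    letI instP : RightAct S (Push C f) := pushAct C f hC.2 hf
    set i : A → Push C f := fun q => Quotient.mk (pushSetoid C f) (.inr q) with hi
    set j : B → Push C f := fun b => Quotient.mk (pushSetoid C f) (.inl b) with hj
    have i_inj : Function.Injective i := by
      intro q q' h
      exact Quotient.exact h
    have i_hom : ∀ (q : A) (s : S), i (q ⊛ s) = i q ⊛ s := fun q s => rfl
    have j_hom : ∀ (b : B) (s : S), j (b ⊛ s) = j b ⊛ s := fun b s => rfl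
    have ji : ∀ c ∈ C, j c = i (f c) := by
      intro c hc
      exact Quotient.sound (⟨hc, rfl⟩ : pushRel C f (.inl c) (.inr (f c)))
    haveI hAne : Nonempty A := RightAct.nonempty (S := S)
    obtain ⟨q0⟩ := id hAne
    have hsub : IsSubact S (Set.range i) := by
      refine ⟨⟨i q0, ⟨q0, rfl⟩⟩, ?_⟩
      rintro p ⟨q, rfl⟩ s
      exact ⟨q ⊛ s, (i_hom q s)⟩
    have hind : IndecomposableSet S (Set.range i) := by
      rintro ⟨B', C', hB', hC', hU, hI⟩
      apply hA
      refine ⟨i ⁻¹' B', i ⁻¹' C', ?_, ?_, ?_, ?_⟩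
      · obtain ⟨p, hp⟩ := hB'.1
        have hpr : p ∈ Set.range i := hU ▸ Set.mem_union_left _ hp
        obtain ⟨q, rfl⟩ := hpr
        exact ⟨⟨q, hp⟩, fun a ha s => by
          simp only [Set.mem_preimage] at ha ⊢
          rw [i_hom]; exact hB'.2 _ ha s⟩
      · obtain ⟨p, hp⟩ := hC'.1
        have hpr : p ∈ Set.range i := hU ▸ Set.mem_union_right _ hp
        obtain ⟨q, rfl⟩ := hpr
        exact ⟨⟨q, hp⟩, fun a ha s => by
          simp only [Set.mem_preimage] at ha ⊢
          rw [i_hom]; exact hC'.2 _ ha s⟩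
      · ext q
        simp only [Set.mem_union, Set.mem_preimage, Set.mem_univ, iff_true]
        have : i q ∈ B' ∪ C' := hU ▸ ⟨q, rfl⟩
        exact this
      · ext q
        simp only [Set.mem_inter_iff, Set.mem_preimage, Set.mem_empty_iff_false, iff_false]
        intro ⟨h1, h2⟩
        have hm : i q ∈ B' ∩ C' := ⟨h1, h2⟩
        rw [hI] at hm
        exact hm
    set h : Push C f → A := Function.invFun i with hh
    have hinv : ∀ q : A, h (i q) = q := Function.leftInverse_invFun i_inj
    have hhom : IsActHomOn S h (Set.range i) := by
      rintro p ⟨q, rfl⟩ s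
      rw [← i_hom, hinv, hinv]
    have hinj : Set.InjOn h (Set.range i) := by
      rintro p ⟨q, rfl⟩ p' ⟨q', rfl⟩ he
      rw [hinv, hinv] at he
      rw [he]
    obtain ⟨g, hg, hge⟩ := hP (Push C f) (Set.range i) hsub hind h hhom hinj
    refine ⟨g ∘ j, ?_, ?_⟩
    · intro b s
      show g (j (b ⊛ s)) = g (j b) ⊛ s
      rw [j_hom]
      exact hg (j b) s
    · intro c hcC
      simp only [Function.comp_apply]
      rw [ji c hcC, hge ⟨f c, rfl⟩, hinv]
  exact ⟨key, fun hInD => key (fun B _ C hC hInd f hf _ => hInD B C hC hInd f hf)⟩
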